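/- Suppose the experiment Π = (S, π) is a weighted garbling of the experiment Π' = (S', π') with weight γ ∈ Γ(Π') of size at most β (β ≥ 1). Then for every static decision problem A = (A, u, μ0) with full-support prior, V^A(Π') ≥ (1/β)·V^A(Π) + (1 − 1/β)·V^A(∅). -/
import Mathlib

lemma wg_comb_le {A : Type*} [Fintype A] [Nonempty A] {ι : Type*} [Fintype ι]
    (c : ι → ℝ) (hc : ∀ i, 0 ≤ c i) (f : ι → A → ℝ) :
    (⨆ a, ∑ i, c i * f i a) ≤ ∑ i, c i * ⨆ a, f i a := by
  apply ciSup_le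
  intro a
  apply Finset.sum_le_sum
  intro i _
  exact mul_le_mul_of_nonneg_left (le_ciSup (Finite.bddAbove_range (f i)) a) (hc i)

/-- "only if" part of Theorem (value comparison): if Π is a weighted
garbling of Π' with weight γ of size at most β (β ≥ 1), then for every static decision
problem with full-support prior, V^A(Π') ≥ (1/β)·V^A(Π) + (1 − 1/β)·V^A(∅). -/
theorem weighted_garbling_value_bound
    {Θ S S' : Type*} [Fintype Θ] [Nonempty Θ]
    [Fintype S] [Nonempty S] [Fintype S'] [Nonempty S']
    (π : S → Θ → ℝ) (π' : S' → Θ → ℝ)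
    (hπ0 : ∀ s θ, 0 ≤ π s θ) (hπ1 : ∀ θ, ∑ s, π s θ = 1)
    (hπ'0 : ∀ s' θ, 0 ≤ π' s' θ) (hπ'1 : ∀ θ, ∑ s', π' s' θ = 1)
    -- Π is a weighted garbling of Π' with weight γ of size at most β
    (γ : S' → ℝ) (hγ0 : ∀ s', 0 ≤ γ s') (hγ1 : ∀ θ, ∑ s', γ s' * π' s' θ = 1)
    (β : ℝ) (hβ1 : 1 ≤ β) (hsize : ∀ s', γ s' ≤ β)
    (φ : S' → S → ℝ) (hφ0 : ∀ s' s, 0 ≤ φ s' s) (hφ1 : ∀ s', ∑ s, φ s' s = 1)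
    (hwg : ∀ s θ, π s θ = ∑ s', φ s' s * γ s' * π' s' θ)
    -- a static decision problem with full-support prior
    (A : Type*) [Fintype A] [Nonempty A] (u : A → Θ → ℝ)
    (μ0 : Θ → ℝ) (hμ0 : ∀ θ, 0 < μ0 θ) (hμ0sum : ∑ θ, μ0 θ = 1) :
    (∑ s', ⨆ a : A, ∑ θ, u a θ * π' s' θ * μ0 θ) ≥
      (1 / β) * (∑ s, ⨆ a : A, ∑ θ, u a θ * π s θ * μ0 θ)
        + (1 - 1 / β) * (⨆ a : A, ∑ θ, u a θ * μ0 θ) := by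
  have hβ0 : (0:ℝ) < β := lt_of_lt_of_le one_pos hβ1
  set g : S' → ℝ := fun s' => ⨆ a : A, ∑ θ, u a θ * π' s' θ * μ0 θ with hg
  -- Step A: value of Π is at most ∑ γ·g
  have hA : (∑ s, ⨆ a : A, ∑ θ, u a θ * π s θ * μ0 θ) ≤ ∑ s', γ s' * g s' := by
    have key : ∀ s : S, (⨆ a : A, ∑ θ, u a θ * π s θ * μ0 θ)
        ≤ ∑ s', (φ s' s * γ s') * g s' := by
      intro s
      have hre : ∀ a : A, (∑ θ, u a θ * π s θ * μ0 θ)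
          = ∑ s', (φ s' s * γ s') * ∑ θ, u a θ * π' s' θ * μ0 θ := by
        intro a
        simp only [hwg, Finset.sum_mul, Finset.mul_sum]
        rw [Finset.sum_comm]
        exact Finset.sum_congr rfl fun s' _ => Finset.sum_congr rfl fun θ _ => by ring
      calc (⨆ a : A, ∑ θ, u a θ * π s θ * μ0 θ)
          = ⨆ a : A, ∑ s', (φ s' s * γ s') * ∑ θ, u a θ * π' s' θ * μ0 θ :=
            iSup_congr hre
        _ ≤ ∑ s', (φ s' s * γ s') * g s' :=
            wg_comb_le _ (fun s' => mul_nonneg (hφ0 s' s) (hγ0 s')) _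
    calc (∑ s, ⨆ a : A, ∑ θ, u a θ * π s θ * μ0 θ)
        ≤ ∑ s, ∑ s', (φ s' s * γ s') * g s' := Finset.sum_le_sum (fun s _ => key s)
      _ = ∑ s', γ s' * g s' := by
          rw [Finset.sum_comm]
          refine Finset.sum_congr rfl fun s' _ => ?_
          have h1 : ∀ s : S, (φ s' s * γ s') * g s' = φ s' s * (γ s' * g s') :=
            fun s => by ring
          simp only [h1]
          rw [← Finset.sum_mul, hφ1 s', one_mul]
  -- Step B: (1 - 1/β)·V(∅) ≤ ∑ (1 - γ/β)·g
  have hB : (1 - 1/β) * (⨆ a : A, ∑ θ, u a θ * μ0 θ) ≤ ∑ s', (1 - γ s' / β) * g s' := by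
    have h1β : (0:ℝ) ≤ 1 - 1/β := by
      have : 1/β ≤ 1 := by rw [div_le_one hβ0]; exact hβ1
      linarith
    rw [Real.mul_iSup_of_nonneg h1β]
    apply ciSup_le
    intro a
    have hre : (1 - 1/β) * ∑ θ, u a θ * μ0 θ
        = ∑ s', (1 - γ s' / β) * ∑ θ, u a θ * π' s' θ * μ0 θ := by
      have hsum : ∀ θ, ∑ s', (1 - γ s' / β) * π' s' θ = 1 - 1/β := by
        intro θ
        have h1 : ∑ s', (1 - γ s' / β) * π' s' θ
            = (∑ s', π' s' θ) - (1/β) * ∑ s', γ s' * π' s' θ := by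
          rw [Finset.mul_sum, ← Finset.sum_sub_distrib]
          exact Finset.sum_congr rfl fun s' _ => by ring
        rw [h1, hπ'1, hγ1]; ring
      calc (1 - 1/β) * ∑ θ, u a θ * μ0 θ
          = ∑ θ, (∑ s', (1 - γ s' / β) * π' s' θ) * (u a θ * μ0 θ) := by
            rw [Finset.mul_sum]
            exact Finset.sum_congr rfl fun θ _ => by rw [hsum θ]
        _ = ∑ θ, ∑ s', (1 - γ s' / β) * (u a θ * π' s' θ * μ0 θ) := by
            refine Finset.sum_congr rfl fun θ _ => ?_
            rw [Finset.sum_mul]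
            exact Finset.sum_congr rfl fun s' _ => by ring
        _ = ∑ s', ∑ θ, (1 - γ s' / β) * (u a θ * π' s' θ * μ0 θ) := Finset.sum_comm
        _ = ∑ s', (1 - γ s' / β) * ∑ θ, u a θ * π' s' θ * μ0 θ := by
            exact Finset.sum_congr rfl fun s' _ => by rw [Finset.mul_sum]
    rw [hre]
    refine Finset.sum_le_sum fun s' _ => ?_
    have hc : 0 ≤ 1 - γ s' / β := by
      have : γ s' / β ≤ 1 := (div_le_one hβ0).mpr (hsize s')
      linarith
    exact mul_le_mul_of_nonneg_left
      (le_ciSup (Finite.bddAbove_range fun a : A => ∑ θ, u a θ * π' s' θ * μ0 θ) a) hc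
  -- Combine
  have hsplit : ∑ s', g s' = (1/β) * (∑ s', γ s' * g s') + ∑ s', (1 - γ s' / β) * g s' := by
    rw [Finset.mul_sum, ← Finset.sum_add_distrib]
    refine Finset.sum_congr rfl fun s' _ => ?_
    field_simp
    ring
  have h1βnn : (0:ℝ) ≤ 1/β := by positivity
  have := mul_le_mul_of_nonneg_left hA h1βnn
  linarith [hsplit, hB, this]
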